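/- Let ω > 0, u₁ ∈ ℝ, let V : I → (0, ∞) be a differentiable function on an interval I, and let F : I → ℝ. Consider the transformation curve Ā₀(t) = [[1/V(t), 0], [−u₁, V(t)]] applied to the system with coefficients (b₀, b₁, b₂) = (1, 0, F ω²), which produces transformed coefficients b'₀ = 1/V², b'₁ = 2u₁/V − 2V'/V, b'₂ = V² F ω² + u₁² − u₁ V'. Then there exists a function D : I → ℝ such that (b'₀, b'₁, b'₂) = (D, 0, D ω²) on I if and only if V'(t) = u₁ for all t ∈ I (so V(t) = u₁ t + u₀ with u₀ = V(t₀) − u₁ t₀) and F(t) = 1/V(t)⁴ for all t ∈ I; in that case D(t) = 1/V(t)². -/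

import Mathlib

/-- Applying the curve `Ā₀ = [[1/V, 0], [−u₁, V]]` to the TDFHO with
coefficients `(1, 0, Fω²)` yields transformed coefficients `b'₀ = 1/V²`,
`b'₁ = 2u₁/V − 2V'/V`, `b'₂ = V²Fω² + u₁² − u₁V'`. There exists `D` with
`(b'₀, b'₁, b'₂) = (D, 0, Dω²)` on the interval `I` iff `V' = u₁` on `I`
(so `V(t) = u₁ t + u₀` with `u₀ = V(t₀) − u₁ t₀`) and `F = 1/V⁴` on `I`;
in that case `D = 1/V²` on `I`. -/
theorem lower_triangular_transform_integrability
    (ω u₁ : ℝ) (hω : 0 < ω)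
    (I : Set ℝ) (hIopen : IsOpen I) (hIconv : Convex ℝ I)
    (V V' F : ℝ → ℝ) (hVpos : ∀ t ∈ I, 0 < V t)
    (hV : ∀ t ∈ I, HasDerivAt V (V' t) t)
    (b'₀ b'₁ b'₂ : ℝ → ℝ)
    (hb'₀ : ∀ t ∈ I, b'₀ t = 1 / (V t) ^ 2)
    (hb'₁ : ∀ t ∈ I, b'₁ t = 2 * u₁ / V t - 2 * V' t / V t)
    (hb'₂ : ∀ t ∈ I, b'₂ t = (V t) ^ 2 * F t * ω ^ 2 + u₁ ^ 2 - u₁ * V' t) :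
    ((∃ D : ℝ → ℝ, ∀ t ∈ I, b'₀ t = D t ∧ b'₁ t = 0 ∧ b'₂ t = D t * ω ^ 2) ↔
      ((∀ t ∈ I, V' t = u₁) ∧ (∀ t ∈ I, F t = 1 / (V t) ^ 4))) ∧
    ((∀ t ∈ I, V' t = u₁) →
      ∀ t₀ ∈ I, ∀ t ∈ I, V t = u₁ * t + (V t₀ - u₁ * t₀)) ∧
    (∀ D : ℝ → ℝ, (∀ t ∈ I, b'₀ t = D t ∧ b'₁ t = 0 ∧ b'₂ t = D t * ω ^ 2) →
      ∀ t ∈ I, D t = 1 / (V t) ^ 2) := by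
  refine ⟨⟨?_, ?_⟩, ?_, ?_⟩
  · rintro ⟨D, hD⟩
    have hV' : ∀ t ∈ I, V' t = u₁ := by
      intro t ht
      have h1 := (hD t ht).2.1
      rw [hb'₁ t ht] at h1
      have hVne := (hVpos t ht).ne'
      field_simp at h1
      linarith
    refine ⟨hV', fun t ht => ?_⟩
    have h2 := (hD t ht).2.2
    rw [hb'₂ t ht, ← (hD t ht).1, hb'₀ t ht, hV' t ht] at h2
    have hVne := (hVpos t ht).ne'
    have hωne := hω.ne'
    field_simp at h2 ⊢
    have h3 : (F t * V t ^ 4 - 1) * ω ^ 2 = 0 := by linear_combination h2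
    rcases mul_eq_zero.1 h3 with h4 | h4
    · linarith
    · exact absurd h4 (pow_ne_zero 2 hωne)
  · rintro ⟨h1, h2⟩
    refine ⟨b'₀, fun t ht => ⟨rfl, ?_, ?_⟩⟩
    · rw [hb'₁ t ht, h1 t ht]; ring
    · have hVne := (hVpos t ht).ne'
      rw [hb'₂ t ht, hb'₀ t ht, h1 t ht, h2 t ht]
      field_simp
      ring
  · intro h1 t₀ ht₀ t ht
    have key : ∀ x ∈ I, ∀ y ∈ I, V x - u₁ * x = V y - u₁ * y := by
      intro x hx y hy
      have hdiff : DifferentiableOn ℝ (fun s => V s - u₁ * s) I := fun z hz =>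
        (((hV z hz).sub ((hasDerivAt_id z).const_mul u₁)).differentiableAt).differentiableWithinAt
      refine hIconv.is_const_of_fderivWithin_eq_zero hdiff (fun z hz => ?_) hx hy
      have hd : HasDerivAt (fun s => V s - u₁ * s) 0 z := by
        have := (hV z hz).sub ((hasDerivAt_id z).const_mul u₁)
        exact this.congr_deriv (by rw [h1 z hz]; ring)
      rw [fderivWithin_of_isOpen hIopen hz]
      ext
      simp [hd.hasFDerivAt.fderiv]
    have := key t ht t₀ ht₀
    linarith
  · intro D hD t ht
    rw [← (hD t ht).1, hb'₀ t ht]
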